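/- The family of finite H-forests has the amalgamation property: for all finite H-forests A, B, C and epimorphisms φ₁ : B → A and φ₂ : C → A, there exist a finite H-forest D and epimorphisms ψ₁ : D → B and ψ₂ : D → C such that φ₁ ∘ ψ₁ = φ₂ ∘ ψ₂; moreover D can be chosen so that its maximal chains are pairwise disjoint. -/

import Mathlib

/-- The Hasse relation of a partial order: `a R b` iff `a = b` or one covers the other. -/
def HasseRel {P : Type*} [PartialOrder P] (a b : P) : Prop :=
  a = b ∨ a ⋖ b ∨ b ⋖ a

/-- An epimorphism of finite partial orders (with their Hasse relations): a surjection such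
that the order and the Hasse relation on the codomain are exactly the images of the
corresponding relations on the domain. -/
def IsPosetEpi {Q P : Type*} [PartialOrder Q] [PartialOrder P] (φ : Q → P) : Prop :=
  Function.Surjective φ ∧
    (∀ a b : Q, a ≤ b → φ a ≤ φ b) ∧
    (∀ a b : Q, HasseRel a b → HasseRel (φ a) (φ b)) ∧
    (∀ a b : P, a ≤ b → ∃ a' b' : Q, a' ≤ b' ∧ φ a' = a ∧ φ b' = b) ∧
    (∀ a b : P, HasseRel a b → ∃ a' b' : Q, HasseRel a' b' ∧ φ a' = a ∧ φ b' = b)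

/-- The Hasse diagram of a partial order, as a simple graph. -/
def hasseGraph (P : Type*) [PartialOrder P] : SimpleGraph P :=
  SimpleGraph.fromRel (fun a b => HasseRel a b)

/-- An H-forest is a partial order whose Hasse diagram contains no cycles. -/
def IsHForest (P : Type*) [PartialOrder P] : Prop :=
  (hasseGraph P).IsAcyclic

/-- The maximal chains of the partial order are pairwise disjoint (membership in `F₀`). -/
def HasDisjointMaxChains (P : Type*) [PartialOrder P] : Prop :=
  ∀ C C' : Set P, IsMaxChain (· ≤ ·) C → IsMaxChain (· ≤ ·) C' → C ≠ C' → Disjoint C C'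

set_option linter.unusedSectionVars false

lemma hasseRel_symm {P : Type*} [PartialOrder P] {a b : P} (h : HasseRel a b) :
    HasseRel b a := by
  rcases h with h | h | h
  · exact Or.inl h.symm
  · exact Or.inr (Or.inr h)
  · exact Or.inr (Or.inl h)

/-! ### The amalgam shape: disjoint union of columns -/

@[ext]
structure Amal (n m : ℕ) where
  idx : Fin n
  pos : Fin (m + 1)

namespace Amal

variable {n m : ℕ}

instance : Finite (Amal n m) := by
  apply Finite.of_injective (fun x : Amal n m => (x.idx, x.pos))
  intro x y h
  simp only [Prod.mk.injEq] at h
  ext <;> simp [h.1, h.2]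

noncomputable instance : Fintype (Amal n m) := Fintype.ofFinite _

instance : PartialOrder (Amal n m) where
  le x y := x.idx = y.idx ∧ x.pos ≤ y.pos
  le_refl x := ⟨rfl, le_refl _⟩
  le_trans x y z h h' := ⟨h.1.trans h'.1, h.2.trans h'.2⟩
  le_antisymm x y h h' := by
    ext
    · exact congrArg Fin.val h.1
    · exact congrArg Fin.val (le_antisymm h.2 h'.2)

lemma le_def {x y : Amal n m} : x ≤ y ↔ x.idx = y.idx ∧ x.pos ≤ y.pos := Iff.rfl

lemma lt_def {x y : Amal n m} : x < y ↔ x.idx = y.idx ∧ x.pos < y.pos := by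
  rw [lt_iff_le_not_ge, le_def, le_def]
  constructor
  · rintro ⟨⟨h1, h2⟩, hn⟩
    have : ¬ y.pos ≤ x.pos := fun hle => hn ⟨h1.symm, hle⟩
    exact ⟨h1, lt_of_le_not_ge h2 this⟩
  · rintro ⟨h1, h2⟩
    exact ⟨⟨h1, h2.le⟩, fun h => absurd h.2 (not_le_of_gt h2)⟩

lemma covBy_iff {x y : Amal n m} :
    x ⋖ y ↔ x.idx = y.idx ∧ (y.pos : ℕ) = (x.pos : ℕ) + 1 := by
  constructor
  · rintro ⟨hlt, hmid⟩
    rw [lt_def] at hlt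
    refine ⟨hlt.1, ?_⟩
    by_contra hne
    have hxy : (x.pos : ℕ) < (y.pos : ℕ) := hlt.2
    have hy : (x.pos : ℕ) + 1 < (y.pos : ℕ) := by omega
    have hz : ((x.pos : ℕ) + 1) < m + 1 := by omega
    exact @hmid ⟨x.idx, ⟨(x.pos : ℕ) + 1, hz⟩⟩
      (lt_def.2 ⟨rfl, by rw [Fin.lt_def]; exact Nat.lt_succ_self _⟩)
      (lt_def.2 ⟨hlt.1, by rw [Fin.lt_def]; exact hy⟩)
  · rintro ⟨h1, h2⟩
    refine ⟨lt_def.2 ⟨h1, by rw [Fin.lt_def]; omega⟩, ?_⟩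
    rintro z hz hz'
    rw [lt_def, Fin.lt_def] at hz hz'
    omega

lemma hasseRel_iff {x y : Amal n m} :
    HasseRel x y ↔ x.idx = y.idx ∧
      ((x.pos : ℕ) = y.pos ∨ (y.pos : ℕ) = (x.pos : ℕ) + 1 ∨ (x.pos : ℕ) = (y.pos : ℕ) + 1) := by
  unfold HasseRel
  rw [covBy_iff, covBy_iff]
  constructor
  · rintro (rfl | ⟨h1, h2⟩ | ⟨h1, h2⟩)
    · exact ⟨rfl, Or.inl rfl⟩
    · exact ⟨h1, Or.inr (Or.inl h2)⟩
    · exact ⟨h1.symm, Or.inr (Or.inr h2)⟩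
  · rintro ⟨h1, h2 | h2 | h2⟩
    · refine Or.inl ?_
      ext
      · exact congrArg Fin.val h1
      · exact h2
    · exact Or.inr (Or.inl ⟨h1, h2⟩)
    · exact Or.inr (Or.inr ⟨h1.symm, h2⟩)

lemma adj_iff {x y : Amal n m} :
    (hasseGraph (Amal n m)).Adj x y ↔ x.idx = y.idx ∧
      ((y.pos : ℕ) = (x.pos : ℕ) + 1 ∨ (x.pos : ℕ) = (y.pos : ℕ) + 1) := by
  show (SimpleGraph.fromRel _).Adj x y ↔ _
  rw [SimpleGraph.fromRel_adj]
  constructor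
  · rintro ⟨hne, h | h⟩ <;> rw [hasseRel_iff] at h
    · refine ⟨h.1, ?_⟩
      rcases h.2 with h2 | h2 | h2
      · exact absurd (by ext; exacts [congrArg Fin.val h.1, h2]) hne
      · exact Or.inl h2
      · exact Or.inr h2
    · refine ⟨h.1.symm, ?_⟩
      rcases h.2 with h2 | h2 | h2
      · exact absurd (by ext; exacts [congrArg Fin.val h.1.symm, h2.symm]) hne
      · exact Or.inr h2
      · exact Or.inl h2
  · rintro ⟨h1, h2 | h2⟩
    · refine ⟨?_, Or.inl (hasseRel_iff.2 ⟨h1, Or.inr (Or.inl h2)⟩)⟩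
      intro h; subst h; omega
    · refine ⟨?_, Or.inl (hasseRel_iff.2 ⟨h1, Or.inr (Or.inr h2)⟩)⟩
      intro h; subst h; omega

lemma isHForest : IsHForest (Amal n m) := by
  rw [IsHForest, SimpleGraph.isAcyclic_iff_forall_adj_isBridge]
  -- helper: one-directional bridge claim
  suffices H : ∀ x y : Amal n m, (hasseGraph (Amal n m)).Adj x y →
      (y.pos : ℕ) = (x.pos : ℕ) + 1 → (hasseGraph (Amal n m)).IsBridge s(x, y) by
    intro x y hadj
    rcases (adj_iff.1 hadj).2 with h | h
    · exact H x y hadj h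
    · rw [Sym2.eq_swap]
      exact H y x hadj.symm h
  intro x y hadj hstep
  rw [SimpleGraph.isBridge_iff]
  intro hreach
  -- invariant: being "above the cut"
  set G' := hasseGraph (Amal n m) \ SimpleGraph.fromEdgeSet {s(x, y)} with hG'
  set P : Amal n m → Prop := fun z => z.idx = x.idx ∧ (x.pos : ℕ) + 1 ≤ (z.pos : ℕ) with hP
  have hclosed : ∀ a b : Amal n m, G'.Adj a b → P a → P b := by
    intro a b hab hPa
    rw [hG', SimpleGraph.sdiff_adj] at hab
    obtain ⟨hab1, hab2⟩ := hab
    rw [adj_iff] at hab1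
    have hidx : b.idx = x.idx := hab1.1 ▸ hPa.1
    refine ⟨hidx, ?_⟩
    by_contra hb
    push_neg at hb
    -- then a = y and b = x, contradicting the deleted edge
    have ha' : (a.pos : ℕ) = (x.pos : ℕ) + 1 := by omega
    have hb' : (b.pos : ℕ) = (x.pos : ℕ) := by omega
    have hax : a = y := by
      ext
      · exact congrArg Fin.val (hPa.1.trans (adj_iff.1 hadj).1)
      · omega
    have hbx : b = x := by
      ext
      · exact congrArg Fin.val hidx
      · exact hb'
    subst hax; subst hbx
    exact hab2 (SimpleGraph.fromEdgeSet_adj _ |>.2 ⟨by rw [Sym2.eq_swap]; exact rfl, hadj.ne'⟩)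
  have hwalk : ∀ (a b : Amal n m) (_ : G'.Walk a b), P a → P b := by
    intro a b w
    induction w with
    | nil => exact id
    | cons h _ ih => exact fun hPa => ih (hclosed _ _ h hPa)
  obtain ⟨w⟩ := hreach.symm
  have hPy : P y := ⟨(adj_iff.1 hadj).1.symm, by omega⟩
  have := hwalk y x w hPy
  simp only [P] at this
  omega

lemma col_isChain (i : Fin n) :
    IsChain (· ≤ ·) {z : Amal n m | z.idx = i} := by
  intro a ha b hb _
  rcases le_total a.pos b.pos with h | h
  · exact Or.inl ⟨ha.trans hb.symm, h⟩
  · exact Or.inr ⟨hb.trans ha.symm, h⟩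

lemma maxChain_eq_col {S : Set (Amal n m)} (hS : IsMaxChain (· ≤ ·) S) {d : Amal n m}
    (hd : d ∈ S) : S = {z : Amal n m | z.idx = d.idx} := by
  have hsub : S ⊆ {z : Amal n m | z.idx = d.idx} := by
    intro z hz
    rcases eq_or_ne z d with rfl | hne
    · exact rfl
    · rcases hS.1 hz hd hne with h | h
      · exact h.1
      · exact h.1.symm
  exact hS.2 (col_isChain d.idx) hsub

lemma hasDisjointMaxChains : HasDisjointMaxChains (Amal n m) := by
  intro S S' hS hS' hne
  rw [Set.disjoint_left]
  intro d hd hd'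
  exact hne ((maxChain_eq_col hS hd).trans (maxChain_eq_col hS' hd').symm)

end Amal


section Utils

variable {X : Type*} [PartialOrder X]

/-- Monotonicity along a stay-or-cover walk. -/
lemma walk_mono {f : ℕ → X} {i j : ℕ}
    (hstep : ∀ k, i ≤ k → k < j → (f k = f (k + 1) ∨ f k ⋖ f (k + 1))) (hij : i ≤ j) :
    f i ≤ f j := by
  induction j with
  | zero =>
    have : i = 0 := by omega
    exact le_of_eq (congrArg f this)
  | succ j ih =>
    rcases Nat.lt_or_ge i (j+1) with h | h
    · have hle : f i ≤ f j := ih (fun k hk hk' => hstep k hk (by omega)) (by omega)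
      rcases hstep j (by omega) (by omega) with he | hc
      · exact hle.trans he.le
      · exact hle.trans hc.le
    · have : i = j + 1 := by omega
      exact le_of_eq (congrArg f this)

lemma walk_strictMono {p : ℕ → X} {n : ℕ}
    (hstep : ∀ k < n, p k ⋖ p (k + 1)) {i j : ℕ} (hij : i < j) (hj : j ≤ n) :
    p i < p j := by
  induction j with
  | zero => omega
  | succ j ih =>
    have hc : p j ⋖ p (j + 1) := hstep j (by omega)
    rcases Nat.lt_or_ge i j with h | h
    · exact (ih h (by omega)).trans hc.lt
    · have : i = j := by omega
      subst this
      exact hc.lt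

lemma chain_card_bound [Fintype X] {p : ℕ → X} {n : ℕ}
    (hstep : ∀ k < n, p k ⋖ p (k + 1)) : n + 1 ≤ Fintype.card X := by
  have hinj : Function.Injective (fun i : Fin (n + 1) => p i) := by
    intro i j hij
    by_contra hne
    rcases Ne.lt_or_gt (fun h : i = j => hne h) with h | h
    · exact absurd hij (ne_of_lt (walk_strictMono hstep (by exact_mod_cast h) (by omega)))
    · exact absurd hij.symm (ne_of_lt (walk_strictMono hstep (by exact_mod_cast h) (by omega)))
  simpa using Fintype.card_le_of_injective _ hinj

/-- Existence of a saturated (cover) chain between comparable elements of a finite poset. -/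
lemma exists_satChain [Fintype X] {b b' : X} (hle : b ≤ b') :
    ∃ (n : ℕ) (p : ℕ → X), p 0 = b ∧ p n = b' ∧ ∀ i < n, p i ⋖ p (i + 1) := by
  classical
  suffices H : ∀ (k : ℕ) (b b' : X),
      (Finset.univ.filter (fun z => b < z ∧ z ≤ b')).card ≤ k → b ≤ b' →
      ∃ (n : ℕ) (p : ℕ → X), p 0 = b ∧ p n = b' ∧ ∀ i < n, p i ⋖ p (i + 1) from
    H _ b b' le_rfl hle
  intro k
  induction k with
  | zero =>
    intro b b' hcard hle
    rcases eq_or_lt_of_le hle with rfl | hlt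
    · exact ⟨0, fun _ => b, rfl, rfl, by omega⟩
    · exfalso
      have : b' ∈ Finset.univ.filter (fun z => b < z ∧ z ≤ b') := by
        simp [hlt]
      have := Finset.card_pos.2 ⟨b', this⟩
      omega
  | succ k ih =>
    intro b b' hcard hle
    rcases eq_or_lt_of_le hle with rfl | hlt
    · exact ⟨0, fun _ => b, rfl, rfl, by omega⟩
    · set S := Finset.univ.filter (fun z => b < z ∧ z ≤ b') with hS
      have hSne : S.Nonempty := ⟨b', by simp [hS, hlt]⟩
      obtain ⟨z₀, hz₀', hzmin'⟩ := Finset.exists_minimal hSne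
      have hz₀ : z₀ ∈ S := hz₀'
      have hzmin : ∀ x' ∈ S, ¬ x' < z₀ := fun x' hx' hlt => hlt.not_ge (hzmin' hx' hlt.le)
      rw [hS, Finset.mem_filter] at hz₀
      have hcov : b ⋖ z₀ := by
        refine ⟨hz₀.2.1, ?_⟩
        intro w hw hw'
        exact hzmin w (by simp [hS, hw, hw'.le.trans hz₀.2.2]) hw'
      have hssub : Finset.univ.filter (fun z => z₀ < z ∧ z ≤ b') ⊂ S := by
        rw [Finset.ssubset_iff_of_subset]
        · exact ⟨z₀, by simp [hS, hz₀.2.1, hz₀.2.2], by simp⟩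
        · intro w hw
          rw [Finset.mem_filter] at hw
          simp [hS, hz₀.2.1.trans hw.2.1, hw.2.2]
      have hcard' : (Finset.univ.filter (fun z => z₀ < z ∧ z ≤ b')).card ≤ k := by
        have := Finset.card_lt_card hssub
        omega
      obtain ⟨n, p, hp0, hpn, hpstep⟩ := ih z₀ b' hcard' hz₀.2.2
      refine ⟨n + 1, fun i => if i = 0 then b else p (i - 1), by simp, by simp [hpn], ?_⟩
      intro i hi
      rcases Nat.eq_zero_or_pos i with rfl | hpos
      · simpa [hp0] using hcov
      · have h1 : ¬ (i = 0) := by omega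
        have h2 : ¬ (i + 1 = 0) := by omega
        simp only [h1, h2, if_false]
        have : i - 1 + 1 = i + 1 - 1 := by omega
        rw [← this]
        exact hpstep (i - 1) (by omega)

end Utils

section Dedup

attribute [local instance] Classical.propDecidable

variable {A : Type*} [PartialOrder A]

/-- Number of strict steps of the walk `u` before time `i`. -/
noncomputable def sFun (u : ℕ → A) : ℕ → ℕ
  | 0 => 0
  | (i + 1) => sFun u i + (if u (i + 1) = u i then 0 else 1)

/-- The destuttered list of values of `u` on `[0, i]`. -/
noncomputable def dl (u : ℕ → A) : ℕ → List A
  | 0 => [u 0]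
  | (i + 1) => if u (i + 1) = u i then dl u i else dl u i ++ [u (i + 1)]

lemma sFun_zero (u : ℕ → A) : sFun u 0 = 0 := rfl

lemma sFun_succ (u : ℕ → A) (i : ℕ) :
    sFun u (i + 1) = sFun u i + (if u (i + 1) = u i then 0 else 1) := by
  rw [sFun]

lemma dl_succ (u : ℕ → A) (i : ℕ) :
    dl u (i + 1) = if u (i + 1) = u i then dl u i else dl u i ++ [u (i + 1)] := by
  rw [dl]

lemma sFun_step_eq (u : ℕ → A) {i : ℕ} (h : u (i + 1) = u i) :
    sFun u (i + 1) = sFun u i := by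
  rw [sFun_succ, if_pos h]
  omega

lemma sFun_step_ne (u : ℕ → A) {i : ℕ} (h : u (i + 1) ≠ u i) :
    sFun u (i + 1) = sFun u i + 1 := by
  rw [sFun_succ, if_neg h]

lemma sFun_mono (u : ℕ → A) {i j : ℕ} (h : i ≤ j) : sFun u i ≤ sFun u j := by
  induction j with
  | zero =>
    have : i = 0 := by omega
    subst this
    exact le_rfl
  | succ j ih =>
    rcases Nat.lt_or_ge i (j + 1) with h' | h'
    · rw [sFun_succ]
      have := ih (by omega)
      omega
    · have : i = j + 1 := by omega
      subst this
      exact le_rfl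

lemma dl_length (u : ℕ → A) (i : ℕ) : (dl u i).length = sFun u i + 1 := by
  induction i with
  | zero => rfl
  | succ i ih =>
    rw [dl_succ, sFun_succ]
    by_cases h : u (i + 1) = u i <;> simp [h, ih]

lemma dl_getElem (u : ℕ → A) (i : ℕ) : ∀ i' ≤ i, (dl u i)[sFun u i']? = some (u i') := by
  induction i with
  | zero =>
    intro i' hi'
    interval_cases i'
    rfl
  | succ i ih =>
    intro i' hi'
    rcases Nat.lt_or_ge i' (i + 1) with h' | h'
    · rw [dl_succ]
      by_cases h : u (i + 1) = u i
      · rw [if_pos h]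
        exact ih i' (by omega)
      · rw [if_neg h]
        rw [List.getElem?_append_left]
        · exact ih i' (by omega)
        · rw [dl_length]
          have h1 := sFun_mono u (show i' ≤ i by omega)
          omega
    · have : i' = i + 1 := by omega
      subst this
      rw [dl_succ]
      by_cases h : u (i + 1) = u i
      · rw [if_pos h, sFun_step_eq u h, h]
        exact ih i le_rfl
      · rw [if_neg h, sFun_step_ne u h]
        have hlen : (dl u i).length = sFun u i + 1 := dl_length u i
        rw [show sFun u i + 1 = (dl u i).length from hlen.symm]
        simp

lemma dl_head (u : ℕ → A) (i : ℕ) : (dl u i).head? = some (u 0) := by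
  induction i with
  | zero => rfl
  | succ i ih =>
    rw [dl_succ]
    by_cases h : u (i + 1) = u i
    · rw [if_pos h]; exact ih
    · rw [if_neg h]
      have hne : dl u i ≠ [] := by
        intro hnil
        have := dl_length u i
        rw [hnil] at this
        simp at this
      rw [List.head?_append_of_ne_nil _ hne]
      exact ih

lemma dl_getLast (u : ℕ → A) (i : ℕ) : (dl u i).getLast? = some (u i) := by
  induction i with
  | zero => rfl
  | succ i ih =>
    rw [dl_succ]
    by_cases h : u (i + 1) = u i
    · rw [if_pos h, h]; exact ih
    · rw [if_neg h]
      exact List.getLast?_concat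

lemma dl_chain (u : ℕ → A) (n : ℕ)
    (hstep : ∀ k < n, u k = u (k + 1) ∨ u k ⋖ u (k + 1)) :
    ∀ i ≤ n, (dl u i).Chain' (· ⋖ ·) := by
  intro i hi
  induction i with
  | zero => exact List.isChain_singleton _
  | succ i ih =>
    rw [dl_succ]
    by_cases h : u (i + 1) = u i
    · rw [if_pos h]; exact ih (by omega)
    · rw [if_neg h]
      apply List.isChain_append.2
      refine ⟨ih (by omega), List.isChain_singleton _, ?_⟩
      intro x hx y hy
      rw [dl_getLast] at hx
      simp at hx hy
      subst hx; subst hy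
      rcases hstep i (by omega) with he | hc
      · exact absurd he.symm h
      · exact hc

end Dedup

section Forest

variable {A : Type*} [PartialOrder A]

lemma hasseGraph_adj_of_covBy {a b : A} (h : a ⋖ b) : (hasseGraph A).Adj a b := by
  show (SimpleGraph.fromRel _).Adj a b
  rw [SimpleGraph.fromRel_adj]
  exact ⟨h.ne, Or.inl (Or.inr (Or.inl h))⟩

lemma exists_walk_of_chain (G : SimpleGraph A) :
    ∀ (r : List A) (x y : A), List.Chain G.Adj x r → (x :: r).getLast? = some y →
      ∃ w : G.Walk x y, w.support = x :: r := by
  intro r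
  induction r with
  | nil =>
    intro x y _ hlast
    simp at hlast
    subst hlast
    exact ⟨SimpleGraph.Walk.nil, rfl⟩
  | cons z r ih =>
    intro x y hchain hlast
    replace hchain : G.Adj x z ∧ List.Chain G.Adj z r := List.isChain_cons_cons.1 hchain
    rw [List.getLast?_cons_cons] at hlast
    obtain ⟨w', hw'⟩ := ih z y hchain.2 hlast
    exact ⟨SimpleGraph.Walk.cons hchain.1 w', by simp [hw']⟩

lemma coverChain_nodup {l : List A} (h : l.Chain' (· ⋖ ·)) : l.Nodup := by
  have hlt : l.Chain' (· < ·) := h.imp (fun a b hab => hab.lt)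
  replace hlt := List.isChain_iff_pairwise.1 hlt
  exact hlt.nodup

/-- In an H-forest, cover-chains between the same endpoints are unique. -/
lemma forest_coverChain_unique (hA : IsHForest A) (l₁ l₂ : List A)
    (h₁ : l₁.Chain' (· ⋖ ·)) (h₂ : l₂.Chain' (· ⋖ ·))
    (hne₁ : l₁ ≠ []) (hne₂ : l₂ ≠ [])
    (hh : l₁.head? = l₂.head?) (hl : l₁.getLast? = l₂.getLast?) : l₁ = l₂ := by
  obtain ⟨x₁, r₁, rfl⟩ := List.exists_cons_of_ne_nil hne₁
  obtain ⟨x₂, r₂, rfl⟩ := List.exists_cons_of_ne_nil hne₂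
  simp only [List.head?_cons, Option.some_inj] at hh
  subst hh
  obtain ⟨y, hy⟩ : ∃ y, (x₁ :: r₁).getLast? = some y :=
    ⟨_, List.getLast?_eq_getLast (by simp)⟩
  have hy₂ : (x₁ :: r₂).getLast? = some y := hl ▸ hy
  have hadj₁ : List.Chain (hasseGraph A).Adj x₁ r₁ :=
    (h₁.imp (fun a b hab => hasseGraph_adj_of_covBy hab) : List.Chain' _ (x₁ :: r₁))
  have hadj₂ : List.Chain (hasseGraph A).Adj x₁ r₂ :=
    (h₂.imp (fun a b hab => hasseGraph_adj_of_covBy hab) : List.Chain' _ (x₁ :: r₂))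
  obtain ⟨w₁, hw₁⟩ := exists_walk_of_chain (hasseGraph A) r₁ x₁ y hadj₁ hy
  obtain ⟨w₂, hw₂⟩ := exists_walk_of_chain (hasseGraph A) r₂ x₁ y hadj₂ hy₂
  have hp₁ : w₁.IsPath := by
    rw [SimpleGraph.Walk.isPath_def, hw₁]
    exact coverChain_nodup h₁
  have hp₂ : w₂.IsPath := by
    rw [SimpleGraph.Walk.isPath_def, hw₂]
    exact coverChain_nodup h₂
  have := SimpleGraph.isAcyclic_iff_path_unique.mp hA ⟨w₁, hp₁⟩ ⟨w₂, hp₂⟩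
  have hww : w₁ = w₂ := congrArg Subtype.val this
  rw [← hw₁, ← hw₂, hww]

/-- The key synchronization lemma: two stay-or-cover walks in an H-forest with the
same endpoints take the same value whenever their step-counters agree. -/
lemma cross_sync (hA : IsHForest A) {u v : ℕ → A} {n₁ n₂ : ℕ}
    (hu : ∀ k < n₁, u k = u (k + 1) ∨ u k ⋖ u (k + 1))
    (hv : ∀ k < n₂, v k = v (k + 1) ∨ v k ⋖ v (k + 1))
    (h0 : u 0 = v 0) (hend : u n₁ = v n₂) :
    (∀ i ≤ n₁, ∀ j ≤ n₂, sFun u i = sFun v j → u i = v j) ∧ sFun u n₁ = sFun v n₂ := by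
  have hdl : dl u n₁ = dl v n₂ := by
    refine forest_coverChain_unique hA _ _ (dl_chain u n₁ hu n₁ le_rfl)
      (dl_chain v n₂ hv n₂ le_rfl) ?_ ?_ ?_ ?_
    · intro h
      have := dl_length u n₁
      rw [h] at this
      simp at this
    · intro h
      have := dl_length v n₂
      rw [h] at this
      simp at this
    · rw [dl_head, dl_head, h0]
    · rw [dl_getLast, dl_getLast, hend]
  constructor
  · intro i hi j hj hs
    have e₁ : (dl u n₁)[sFun u i]? = some (u i) := dl_getElem u n₁ i hi
    have e₂ : (dl v n₂)[sFun v j]? = some (v j) := dl_getElem v n₂ j hj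
    rw [hdl, hs] at e₁
    rw [e₂] at e₁
    exact (Option.some_inj.mp e₁).symm
  · have := congrArg List.length hdl
    rw [dl_length, dl_length] at this
    omega

end Forest

section Stair

/-- The staircase merge of two step-counting functions. -/
lemma stair (s t : ℕ → ℕ) (n₁ n₂ : ℕ)
    (hs : ∀ k, s (k + 1) = s k ∨ s (k + 1) = s k + 1)
    (ht : ∀ k, t (k + 1) = t k ∨ t (k + 1) = t k + 1)
    (hsmono : ∀ i j : ℕ, i ≤ j → s i ≤ s j)
    (htmono : ∀ i j : ℕ, i ≤ j → t i ≤ t j)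
    (hs0 : s 0 = 0) (ht0 : t 0 = 0)
    (hend : s n₁ = t n₂) :
    ∃ I J : ℕ → ℕ,
      I 0 = 0 ∧ J 0 = 0 ∧
      (∀ r, I r ≤ n₁ ∧ J r ≤ n₂ ∧ s (I r) = t (J r)) ∧
      (∀ r, (I (r + 1) = I r ∨ (I (r + 1) = I r + 1 ∧ I r < n₁)) ∧
            (J (r + 1) = J r ∨ (J (r + 1) = J r + 1 ∧ J r < n₂))) ∧
      (∀ r, n₁ + n₂ ≤ r → I r = n₁ ∧ J r = n₂) := by
  classical
  set F : ℕ × ℕ → ℕ × ℕ := fun ij =>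
    if ij.1 < n₁ ∧ s (ij.1 + 1) = s ij.1 then (ij.1 + 1, ij.2)
    else if ij.2 < n₂ ∧ t (ij.2 + 1) = t ij.2 then (ij.1, ij.2 + 1)
    else if ij.1 < n₁ then (ij.1 + 1, ij.2 + 1) else ij with hFdef
  have hF : ∀ ij : ℕ × ℕ, ij.1 ≤ n₁ → ij.2 ≤ n₂ → s ij.1 = t ij.2 →
      ((F ij).1 ≤ n₁ ∧ (F ij).2 ≤ n₂ ∧ s (F ij).1 = t (F ij).2) ∧
      ((F ij).1 = ij.1 ∨ ((F ij).1 = ij.1 + 1 ∧ ij.1 < n₁)) ∧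
      ((F ij).2 = ij.2 ∨ ((F ij).2 = ij.2 + 1 ∧ ij.2 < n₂)) ∧
      (¬(ij.1 = n₁ ∧ ij.2 = n₂) → ij.1 + ij.2 < (F ij).1 + (F ij).2) := by
    rintro ⟨i, j⟩ hi hj hsync
    simp only at hi hj hsync ⊢
    by_cases h1 : i < n₁ ∧ s (i + 1) = s i
    · have e : F (i, j) = (i + 1, j) := by rw [hFdef]; exact if_pos h1
      rw [e]
      exact ⟨⟨by omega, hj, by rw [h1.2, hsync]⟩, Or.inr ⟨rfl, h1.1⟩, Or.inl rfl,
        fun _ => by omega⟩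
    · by_cases h2 : j < n₂ ∧ t (j + 1) = t j
      · have e : F (i, j) = (i, j + 1) := by rw [hFdef]; simp only [if_neg h1]; exact if_pos h2
        rw [e]
        exact ⟨⟨hi, by omega, by rw [h2.2, hsync]⟩, Or.inl rfl, Or.inr ⟨rfl, h2.1⟩,
          fun _ => by omega⟩
      · by_cases h3 : i < n₁
        · have e : F (i, j) = (i + 1, j + 1) := by
            rw [hFdef]; simp only [if_neg h1, if_neg h2]; exact if_pos h3
          have hs1 : s (i + 1) = s i + 1 := by
            rcases hs i with h | h
            · exact absurd ⟨h3, h⟩ h1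
            · exact h
          have hjlt : j < n₂ := by
            by_contra hj'
            have : j = n₂ := by omega
            subst this
            have := hsmono (i + 1) n₁ (by omega)
            omega
          have ht1 : t (j + 1) = t j + 1 := by
            rcases ht j with h | h
            · exact absurd ⟨hjlt, h⟩ h2
            · exact h
          rw [e]
          exact ⟨⟨by omega, by omega, by rw [hs1, ht1, hsync]⟩, Or.inr ⟨rfl, h3⟩,
            Or.inr ⟨rfl, hjlt⟩, fun _ => by omega⟩
        · have e : F (i, j) = (i, j) := by
            rw [hFdef]; simp only [if_neg h1, if_neg h2]; exact if_neg h3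
          have hi' : i = n₁ := by omega
          have hj' : j = n₂ := by
            by_contra hj''
            have hjlt : j < n₂ := by omega
            have ht1 : t (j + 1) = t j + 1 := by
              rcases ht j with h | h
              · exact absurd ⟨hjlt, h⟩ h2
              · exact h
            have := htmono (j + 1) n₂ (by omega)
            rw [hi'] at hsync
            omega
          rw [e]
          exact ⟨⟨hi, hj, hsync⟩, Or.inl rfl, Or.inl rfl, fun h => absurd ⟨hi', hj'⟩ h⟩
  set It : ℕ → ℕ × ℕ := fun r => F^[r] (0, 0) with hItdef
  have hIt0 : It 0 = (0, 0) := rfl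
  have hItsucc : ∀ r, It (r + 1) = F (It r) := by
    intro r
    rw [hItdef]
    exact Function.iterate_succ_apply' F r (0, 0)
  have hINV : ∀ r, (It r).1 ≤ n₁ ∧ (It r).2 ≤ n₂ ∧ s (It r).1 = t (It r).2 := by
    intro r
    induction r with
    | zero =>
      refine ⟨Nat.zero_le _, Nat.zero_le _, ?_⟩
      rw [hIt0]
      simp [hs0, ht0]
    | succ r ih =>
      rw [hItsucc]
      exact (hF (It r) ih.1 ih.2.1 ih.2.2).1
  have hstep : ∀ r, ((It (r + 1)).1 = (It r).1 ∨ ((It (r + 1)).1 = (It r).1 + 1 ∧ (It r).1 < n₁)) ∧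
      ((It (r + 1)).2 = (It r).2 ∨ ((It (r + 1)).2 = (It r).2 + 1 ∧ (It r).2 < n₂)) := by
    intro r
    obtain ⟨h1, h2, h3⟩ := hINV r
    have := hF (It r) h1 h2 h3
    rw [hItsucc]
    exact ⟨this.2.1, this.2.2.1⟩
  have hprog : ∀ r, ((It r).1 = n₁ ∧ (It r).2 = n₂) ∨ r ≤ (It r).1 + (It r).2 := by
    intro r
    induction r with
    | zero => exact Or.inr (by omega)
    | succ r ih =>
      obtain ⟨h1, h2, h3⟩ := hINV r
      have hFr := hF (It r) h1 h2 h3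
      rw [hItsucc]
      by_cases hdone : (It r).1 = n₁ ∧ (It r).2 = n₂
      · left
        rcases hFr.2.1 with h | h <;> rcases hFr.2.2.1 with h' | h' <;> omega
      · right
        have := hFr.2.2.2 hdone
        rcases ih with ih | ih
        · exact absurd ih hdone
        · omega
  refine ⟨fun r => (It r).1, fun r => (It r).2, congrArg Prod.fst hIt0, congrArg Prod.snd hIt0,
    hINV, hstep, ?_⟩
  intro r hr
  show (It r).1 = n₁ ∧ (It r).2 = n₂
  rcases hprog r with h | h
  · exact h
  · obtain ⟨h1, h2, _⟩ := hINV r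
    omega

end Stair

section Merge

variable {A B C : Type*} [PartialOrder A] [PartialOrder B] [PartialOrder C]

lemma sFun_step {A : Type*} [PartialOrder A] (u : ℕ → A) (k : ℕ) :
    sFun u (k + 1) = sFun u k ∨ sFun u (k + 1) = sFun u k + 1 := by
  classical
  by_cases h : u (k + 1) = u k
  · exact Or.inl (sFun_step_eq u h)
  · exact Or.inr (sFun_step_ne u h)

lemma image_steps {φ : B → A} (hm : ∀ a b : B, a ≤ b → φ a ≤ φ b)
    (hh : ∀ a b : B, HasseRel a b → HasseRel (φ a) (φ b))
    {p : ℕ → B} {n : ℕ} (hp : ∀ k < n, p k ⋖ p (k + 1)) :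
    ∀ k < n, φ (p k) = φ (p (k + 1)) ∨ φ (p k) ⋖ φ (p (k + 1)) := by
  intro k hk
  have hc := hp k hk
  have h := hh _ _ (Or.inr (Or.inl hc))
  have hle := hm _ _ hc.le
  unfold HasseRel at h
  rcases h with h | h | h
  · exact Or.inl h
  · exact Or.inr h
  · exact absurd hle (not_le_of_gt h.lt)

lemma merge [Fintype B] [Fintype C]
    (hA : IsHForest A) (φ₁ : B → A) (φ₂ : C → A)
    (hm₁ : ∀ a b : B, a ≤ b → φ₁ a ≤ φ₁ b)
    (hh₁ : ∀ a b : B, HasseRel a b → HasseRel (φ₁ a) (φ₁ b))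
    (hm₂ : ∀ a b : C, a ≤ b → φ₂ a ≤ φ₂ b)
    (hh₂ : ∀ a b : C, HasseRel a b → HasseRel (φ₂ a) (φ₂ b))
    {b b' : B} {c c' : C} (hbb : b ≤ b') (hcc : c ≤ c')
    (he0 : φ₁ b = φ₂ c) (he1 : φ₁ b' = φ₂ c') :
    ∃ (f : ℕ → B) (g : ℕ → C),
      (∀ k, (f k = f (k + 1) ∨ f k ⋖ f (k + 1)) ∧ (g k = g (k + 1) ∨ g k ⋖ g (k + 1))) ∧
      (∀ k, φ₁ (f k) = φ₂ (g k)) ∧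
      (∀ k, Fintype.card B + Fintype.card C ≤ k → f k = b' ∧ g k = c') ∧
      f 0 = b ∧ g 0 = c := by
  obtain ⟨n₁, p, hp0, hpn, hpstep⟩ := exists_satChain hbb
  obtain ⟨n₂, q, hq0, hqn, hqstep⟩ := exists_satChain hcc
  set u : ℕ → A := fun k => φ₁ (p k) with hu_def
  set v : ℕ → A := fun k => φ₂ (q k) with hv_def
  have hu : ∀ k < n₁, u k = u (k + 1) ∨ u k ⋖ u (k + 1) := image_steps hm₁ hh₁ hpstep
  have hv : ∀ k < n₂, v k = v (k + 1) ∨ v k ⋖ v (k + 1) := image_steps hm₂ hh₂ hqstep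
  have h0 : u 0 = v 0 := by rw [hu_def, hv_def]; simp only []; rw [hp0, hq0, he0]
  have hend : u n₁ = v n₂ := by rw [hu_def, hv_def]; simp only []; rw [hpn, hqn, he1]
  obtain ⟨hcross, hsend⟩ := cross_sync hA hu hv h0 hend
  obtain ⟨I, J, hI0, hJ0, hINV, hstep, hfin⟩ :=
    stair (sFun u) (sFun v) n₁ n₂ (sFun_step u) (sFun_step v)
      (fun i j h => sFun_mono u h) (fun i j h => sFun_mono v h) rfl rfl hsend
  have hbd₁ : n₁ + 1 ≤ Fintype.card B := chain_card_bound hpstep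
  have hbd₂ : n₂ + 1 ≤ Fintype.card C := chain_card_bound hqstep
  refine ⟨fun r => p (I r), fun r => q (J r), ?_, ?_, ?_,
    by show p (I 0) = b; rw [hI0, hp0], by show q (J 0) = c; rw [hJ0, hq0]⟩
  · intro k
    constructor
    · show p (I k) = p (I (k + 1)) ∨ p (I k) ⋖ p (I (k + 1))
      rcases (hstep k).1 with h | ⟨h, hlt⟩
      · exact Or.inl (congrArg p h.symm)
      · rw [h]
        exact Or.inr (hpstep (I k) hlt)
    · show q (J k) = q (J (k + 1)) ∨ q (J k) ⋖ q (J (k + 1))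
      rcases (hstep k).2 with h | ⟨h, hlt⟩
      · exact Or.inl (congrArg q h.symm)
      · rw [h]
        exact Or.inr (hqstep (J k) hlt)
  · intro k
    obtain ⟨h1, h2, h3⟩ := hINV k
    exact hcross (I k) h1 (J k) h2 h3
  · intro k hk
    obtain ⟨hIk, hJk⟩ := hfin k (by omega)
    refine ⟨?_, ?_⟩
    · show p (I k) = b'
      rw [hIk, hpn]
    · show q (J k) = c'
      rw [hJk, hqn]

end Merge

lemma exists_cover_step {X : Type*} [PartialOrder X] {f : ℕ → X} {b b' : X} (hbc : b ⋖ b')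
    (hsteps : ∀ k, f k = f (k + 1) ∨ f k ⋖ f (k + 1)) :
    ∀ M, f 0 = b → f M = b' → ∃ K, K < M ∧ f K = b ∧ f (K + 1) = b' := by
  intro M
  induction M with
  | zero =>
    intro h0 hM
    exact absurd (h0.symm.trans hM) hbc.ne
  | succ M ih =>
    intro h0 hM
    by_cases hfM : f M = b
    · exact ⟨M, by omega, hfM, hM⟩
    · have h1 : b ≤ f M := by
        rw [← h0]
        exact walk_mono (fun k _ _ => hsteps k) (Nat.zero_le M)
      have h2 : f M ≤ b' := by
        rw [← hM]
        rcases hsteps M with h | h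
        · exact h.le
        · exact h.lt.le
      have hfM' : f M = b' := by
        rcases lt_or_eq_of_le h2 with h | h
        · exact absurd h (hbc.2 (lt_of_le_of_ne h1 (Ne.symm hfM)))
        · exact h
      obtain ⟨K, hK1, hK2, hK3⟩ := ih h0 hfM'
      exact ⟨K, by omega, hK2, hK3⟩


/-- Amalgamation property for finite H-forests, with the amalgam having pairwise
disjoint maximal chains. -/
theorem stmt_1 (A B C : Type*) [Fintype A] [Fintype B] [Fintype C]
    [PartialOrder A] [PartialOrder B] [PartialOrder C]
    (hA : IsHForest A) (hB : IsHForest B) (hC : IsHForest C)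
    (φ₁ : B → A) (φ₂ : C → A) (h₁ : IsPosetEpi φ₁) (h₂ : IsPosetEpi φ₂) :
    ∃ (D : Type) (_ : Fintype D) (_ : PartialOrder D),
      IsHForest D ∧ HasDisjointMaxChains D ∧
        ∃ (ψ₁ : D → B) (ψ₂ : D → C),
          IsPosetEpi ψ₁ ∧ IsPosetEpi ψ₂ ∧ φ₁ ∘ ψ₁ = φ₂ ∘ ψ₂ := by
  classical
  obtain ⟨hsurj₁, hmono₁, hhasse₁, hpair₁, hhpair₁⟩ := h₁
  obtain ⟨hsurj₂, hmono₂, hhasse₂, hpair₂, hhpair₂⟩ := h₂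
  set M := Fintype.card B + Fintype.card C with hMdef
  set Syn : (ℕ → B) × (ℕ → C) → Prop := fun fg =>
    (∀ k, (fg.1 k = fg.1 (k + 1) ∨ fg.1 k ⋖ fg.1 (k + 1)) ∧
          (fg.2 k = fg.2 (k + 1) ∨ fg.2 k ⋖ fg.2 (k + 1))) ∧
    (∀ k, φ₁ (fg.1 k) = φ₂ (fg.2 k)) ∧
    (∀ k, M ≤ k → fg.1 k = fg.1 M ∧ fg.2 k = fg.2 M) with hSyn
  have hfinI : Finite {fg : (ℕ → B) × (ℕ → C) // Syn fg} := by
    apply Finite.of_injective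
      (fun w : {fg : (ℕ → B) × (ℕ → C) // Syn fg} =>
        ((fun k : Fin (M + 1) => w.1.1 (k : ℕ)), (fun k : Fin (M + 1) => w.1.2 (k : ℕ))))
    intro w w' h
    rw [Prod.mk.injEq] at h
    have hval : ∀ k : ℕ, k ≤ M → w.1.1 k = w'.1.1 k ∧ w.1.2 k = w'.1.2 k := by
      intro k hk
      constructor
      · exact congrFun h.1 ⟨k, by omega⟩
      · exact congrFun h.2 ⟨k, by omega⟩
    apply Subtype.ext
    apply Prod.ext
    · funext k
      rcases le_or_gt k M with hk | hk
      · exact (hval k hk).1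
      · rw [(w.2.2.2 k hk.le).1, (w'.2.2.2 k hk.le).1]
        exact (hval M le_rfl).1
    · funext k
      rcases le_or_gt k M with hk | hk
      · exact (hval k hk).2
      · rw [(w.2.2.2 k hk.le).2, (w'.2.2.2 k hk.le).2]
        exact (hval M le_rfl).2
  obtain ⟨nI, ⟨e⟩⟩ := Finite.exists_equiv_fin {fg : (ℕ → B) × (ℕ → C) // Syn fg}
  -- the merged components
  have hmerge : ∀ (b b' : B) (c c' : C), b ≤ b' → c ≤ c' → φ₁ b = φ₂ c → φ₁ b' = φ₂ c' →
      ∃ w : {fg : (ℕ → B) × (ℕ → C) // Syn fg},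
        w.1.1 0 = b ∧ w.1.1 M = b' ∧ w.1.2 0 = c ∧ w.1.2 M = c' := by
    intro b b' c c' hbb hcc he0 he1
    obtain ⟨f, g, hsteps, hsync, hconst, hf0, hg0⟩ :=
      merge hA φ₁ φ₂ hmono₁ hhasse₁ hmono₂ hhasse₂ hbb hcc he0 he1
    have hfM : f M = b' := (hconst M le_rfl).1
    have hgM : g M = c' := (hconst M le_rfl).2
    refine ⟨⟨(f, g), hsteps, hsync, ?_⟩, hf0, hfM, hg0, hgM⟩
    intro k hk
    constructor
    · show f k = f M
      rw [(hconst k hk).1, hfM]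
    · show g k = g M
      rw [(hconst k hk).2, hgM]
  set D := Amal nI M with hD
  set ψ₁ : D → B := fun x => (e.symm x.idx).1.1 (x.pos : ℕ) with hψ₁
  set ψ₂ : D → C := fun x => (e.symm x.idx).1.2 (x.pos : ℕ) with hψ₂
  have hψval : ∀ (w : {fg : (ℕ → B) × (ℕ → C) // Syn fg}) (k : Fin (M + 1)),
      ψ₁ ⟨e w, k⟩ = w.1.1 (k : ℕ) ∧ ψ₂ ⟨e w, k⟩ = w.1.2 (k : ℕ) := by
    intro w k
    constructor
    · show (e.symm (e w)).1.1 (k : ℕ) = w.1.1 (k : ℕ)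
      rw [Equiv.symm_apply_apply]
    · show (e.symm (e w)).1.2 (k : ℕ) = w.1.2 (k : ℕ)
      rw [Equiv.symm_apply_apply]
  -- basic walk facts for each component
  have hwsteps : ∀ i : Fin nI,
      (∀ k, ((e.symm i).1.1 k = (e.symm i).1.1 (k + 1) ∨ (e.symm i).1.1 k ⋖ (e.symm i).1.1 (k + 1)) ∧
            ((e.symm i).1.2 k = (e.symm i).1.2 (k + 1) ∨ (e.symm i).1.2 k ⋖ (e.symm i).1.2 (k + 1))) :=
    fun i => (e.symm i).2.1
  have hwsync : ∀ (i : Fin nI) (k : ℕ), φ₁ ((e.symm i).1.1 k) = φ₂ ((e.symm i).1.2 k) :=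
    fun i => (e.symm i).2.2.1
  have hwmono₁ : ∀ (i : Fin nI) (k l : ℕ), k ≤ l → (e.symm i).1.1 k ≤ (e.symm i).1.1 l :=
    fun i k l h => walk_mono (fun k' _ _ => (hwsteps i k').1) h
  have hwmono₂ : ∀ (i : Fin nI) (k l : ℕ), k ≤ l → (e.symm i).1.2 k ≤ (e.symm i).1.2 l :=
    fun i k l h => walk_mono (fun k' _ _ => (hwsteps i k').2) h
  refine ⟨D, inferInstance, inferInstance, Amal.isHForest, Amal.hasDisjointMaxChains,
    ψ₁, ψ₂, ⟨?_, ?_, ?_, ?_, ?_⟩, ⟨?_, ?_, ?_, ?_, ?_⟩, ?_⟩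
  -- ψ₁ surjective
  · intro b
    obtain ⟨c, hc⟩ := hsurj₂ (φ₁ b)
    obtain ⟨w, hw1, _, _, _⟩ := hmerge b b c c le_rfl le_rfl hc.symm hc.symm
    exact ⟨⟨e w, ⟨0, by omega⟩⟩, by rw [(hψval w _).1]; exact hw1⟩
  -- ψ₁ monotone
  · intro x y hxy
    obtain ⟨hidx, hpos⟩ := Amal.le_def.1 hxy
    rw [hψ₁]
    simp only []
    rw [← hidx]
    exact hwmono₁ x.idx _ _ hpos
  -- ψ₁ Hasse-preserving
  · intro x y h
    have h' : x = y ∨ x ⋖ y ∨ y ⋖ x := h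
    rcases h' with rfl | h' | h'
    · exact Or.inl rfl
    · obtain ⟨hidx, hval⟩ := Amal.covBy_iff.1 h'
      have hstep := (hwsteps x.idx (x.pos : ℕ)).1
      have hy : ψ₁ y = (e.symm x.idx).1.1 ((x.pos : ℕ) + 1) := by
        rw [hψ₁]
        simp only []
        rw [← hidx, hval]
      have hx : ψ₁ x = (e.symm x.idx).1.1 (x.pos : ℕ) := rfl
      rw [hx, hy]
      rcases hstep with h'' | h''
      · exact Or.inl h''
      · exact Or.inr (Or.inl h'')
    · obtain ⟨hidx, hval⟩ := Amal.covBy_iff.1 h'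
      have hstep := (hwsteps y.idx (y.pos : ℕ)).1
      have hx : ψ₁ x = (e.symm y.idx).1.1 ((y.pos : ℕ) + 1) := by
        rw [hψ₁]
        simp only []
        rw [← hidx, hval]
      have hy : ψ₁ y = (e.symm y.idx).1.1 (y.pos : ℕ) := rfl
      rw [hx, hy]
      rcases hstep with h'' | h''
      · exact Or.inl h''.symm
      · exact Or.inr (Or.inr h'')
  -- ψ₁ lifts ≤-pairs
  · intro b b' hbb
    obtain ⟨c, c', hcc, hc, hc'⟩ := hpair₂ (φ₁ b) (φ₁ b') (hmono₁ b b' hbb)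
    obtain ⟨w, hw1, hw2, _, _⟩ := hmerge b b' c c' hbb hcc hc.symm hc'.symm
    refine ⟨⟨e w, ⟨0, by omega⟩⟩, ⟨e w, ⟨M, by omega⟩⟩, ?_, ?_, ?_⟩
    · exact Amal.le_def.2 ⟨rfl, by simp [Fin.le_def]⟩
    · rw [(hψval w _).1]; exact hw1
    · rw [(hψval w _).1]; exact hw2
  -- ψ₁ lifts Hasse pairs
  · intro b b' h
    have h' : b = b' ∨ b ⋖ b' ∨ b' ⋖ b := h
    have haux : ∀ b b' : B, b ⋖ b' →
        ∃ x y : D, HasseRel x y ∧ ψ₁ x = b ∧ ψ₁ y = b' := by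
      intro b b' hbc
      obtain ⟨c, c', hcc, hc, hc'⟩ := hpair₂ (φ₁ b) (φ₁ b') (hmono₁ b b' hbc.le)
      obtain ⟨w, hw1, hw2, _, _⟩ := hmerge b b' c c' hbc.le hcc hc.symm hc'.symm
      obtain ⟨K, hKlt, hKP, hfK1⟩ :=
        exists_cover_step hbc (fun k => (w.2.1 k).1) M hw1 hw2
      refine ⟨⟨e w, ⟨K, by omega⟩⟩, ⟨e w, ⟨K + 1, by omega⟩⟩,
        Or.inr (Or.inl (Amal.covBy_iff.2 ⟨rfl, rfl⟩)), ?_, ?_⟩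
      · rw [(hψval w _).1]; exact hKP
      · rw [(hψval w _).1]; exact hfK1
    rcases h' with rfl | h' | h'
    · obtain ⟨c, hc⟩ := hsurj₂ (φ₁ b)
      obtain ⟨w, hw1, _, _, _⟩ := hmerge b b c c le_rfl le_rfl hc.symm hc.symm
      refine ⟨⟨e w, ⟨0, by omega⟩⟩, ⟨e w, ⟨0, by omega⟩⟩, Or.inl rfl, ?_, ?_⟩
      · rw [(hψval w _).1]; exact hw1
      · rw [(hψval w _).1]; exact hw1
    · exact haux b b' h'
    · obtain ⟨x, y, hxy, hx, hy⟩ := haux b' b h'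
      exact ⟨y, x, hasseRel_symm hxy, hy, hx⟩
  -- ψ₂ surjective
  · intro c
    obtain ⟨b, hb⟩ := hsurj₁ (φ₂ c)
    obtain ⟨w, _, _, hw3, _⟩ := hmerge b b c c le_rfl le_rfl hb hb
    exact ⟨⟨e w, ⟨0, by omega⟩⟩, by rw [(hψval w _).2]; exact hw3⟩
  -- ψ₂ monotone
  · intro x y hxy
    obtain ⟨hidx, hpos⟩ := Amal.le_def.1 hxy
    rw [hψ₂]
    simp only []
    rw [← hidx]
    exact hwmono₂ x.idx _ _ hpos
  -- ψ₂ Hasse-preserving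
  · intro x y h
    have h' : x = y ∨ x ⋖ y ∨ y ⋖ x := h
    rcases h' with rfl | h' | h'
    · exact Or.inl rfl
    · obtain ⟨hidx, hval⟩ := Amal.covBy_iff.1 h'
      have hstep := (hwsteps x.idx (x.pos : ℕ)).2
      have hy : ψ₂ y = (e.symm x.idx).1.2 ((x.pos : ℕ) + 1) := by
        rw [hψ₂]
        simp only []
        rw [← hidx, hval]
      have hx : ψ₂ x = (e.symm x.idx).1.2 (x.pos : ℕ) := rfl
      rw [hx, hy]
      rcases hstep with h'' | h''
      · exact Or.inl h''
      · exact Or.inr (Or.inl h'')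
    · obtain ⟨hidx, hval⟩ := Amal.covBy_iff.1 h'
      have hstep := (hwsteps y.idx (y.pos : ℕ)).2
      have hx : ψ₂ x = (e.symm y.idx).1.2 ((y.pos : ℕ) + 1) := by
        rw [hψ₂]
        simp only []
        rw [← hidx, hval]
      have hy : ψ₂ y = (e.symm y.idx).1.2 (y.pos : ℕ) := rfl
      rw [hx, hy]
      rcases hstep with h'' | h''
      · exact Or.inl h''.symm
      · exact Or.inr (Or.inr h'')
  -- ψ₂ lifts ≤-pairs
  · intro c c' hcc
    obtain ⟨b, b', hbb, hb, hb'⟩ := hpair₁ (φ₂ c) (φ₂ c') (hmono₂ c c' hcc)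
    obtain ⟨w, _, _, hw3, hw4⟩ := hmerge b b' c c' hbb hcc hb hb'
    refine ⟨⟨e w, ⟨0, by omega⟩⟩, ⟨e w, ⟨M, by omega⟩⟩, ?_, ?_, ?_⟩
    · exact Amal.le_def.2 ⟨rfl, by simp [Fin.le_def]⟩
    · rw [(hψval w _).2]; exact hw3
    · rw [(hψval w _).2]; exact hw4
  -- ψ₂ lifts Hasse pairs
  · intro c c' h
    have h' : c = c' ∨ c ⋖ c' ∨ c' ⋖ c := h
    have haux : ∀ c c' : C, c ⋖ c' →
        ∃ x y : D, HasseRel x y ∧ ψ₂ x = c ∧ ψ₂ y = c' := by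
      intro c c' hbc
      obtain ⟨b, b', hbb, hb, hb'⟩ := hpair₁ (φ₂ c) (φ₂ c') (hmono₂ c c' hbc.le)
      obtain ⟨w, _, _, hw3, hw4⟩ := hmerge b b' c c' hbb hbc.le hb hb'
      obtain ⟨K, hKlt, hKP, hgK1⟩ :=
        exists_cover_step hbc (fun k => (w.2.1 k).2) M hw3 hw4
      refine ⟨⟨e w, ⟨K, by omega⟩⟩, ⟨e w, ⟨K + 1, by omega⟩⟩,
        Or.inr (Or.inl (Amal.covBy_iff.2 ⟨rfl, rfl⟩)), ?_, ?_⟩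
      · rw [(hψval w _).2]; exact hKP
      · rw [(hψval w _).2]; exact hgK1
    rcases h' with rfl | h' | h'
    · obtain ⟨b, hb⟩ := hsurj₁ (φ₂ c)
      obtain ⟨w, _, _, hw3, _⟩ := hmerge b b c c le_rfl le_rfl hb hb
      refine ⟨⟨e w, ⟨0, by omega⟩⟩, ⟨e w, ⟨0, by omega⟩⟩, Or.inl rfl, ?_, ?_⟩
      · rw [(hψval w _).2]; exact hw3
      · rw [(hψval w _).2]; exact hw3
    · exact haux c c' h'
    · obtain ⟨x, y, hxy, hx, hy⟩ := haux c' c h'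
      exact ⟨y, x, hasseRel_symm hxy, hy, hx⟩
  -- commutativity
  · funext x
    exact hwsync x.idx (x.pos : ℕ)
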